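/- (Nonlinear Altomare-Korovkin theorem) Let X be a locally compact metric space and E a vector sublattice of real functions on X containing the constants and all functions d_x^p (x ∈ X) for some p ≥ 1. Let (T_n) be sublinear monotone operators from E into functions on X such that T_n(1) → 1 and T_n(d_x^p)(x) → 0, both uniformly on compact subsets of X. Then for every nonnegative f ∈ E ∩ C_b(X), T_n(f) → f uniformly on compact subsets of X; if each T_n is also translatable, the conclusion holds for all f ∈ E ∩ C_b(X). -/

import Mathlib

open Filter

/-- Strong uniform continuity on a compact set: closeness to points of `K` gives
closeness of values, even for points outside `K`. -/
lemma korovkin_unif_cont {X : Type*} [MetricSpace X] {f : X → ℝ} (hf : Continuous f)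
    {K : Set X} (hK : IsCompact K) {ε : ℝ} (hε : 0 < ε) :
    ∃ δ > 0, ∀ x ∈ K, ∀ y, dist x y < δ → |f y - f x| < ε := by
  have hr : {q : ℝ × ℝ | dist q.1 q.2 < ε} ∈ uniformity ℝ := Metric.dist_mem_uniformity hε
  have h := hK.uniformContinuousAt_of_continuousAt f (fun a _ => hf.continuousAt) hr
  rw [Metric.mem_uniformity_dist] at h
  obtain ⟨δ, hδ, hδ'⟩ := h
  refine ⟨δ, hδ, fun x hx y hxy => ?_⟩
  have := hδ' (a := x) (b := y) hxy hx
  simpa [Real.dist_eq, abs_sub_comm] using this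

set_option maxHeartbeats 1000000 in
theorem stmt17 {X : Type*} [MetricSpace X] [LocallyCompactSpace X]
    (E : Set (X → ℝ))
    (hEadd : ∀ f ∈ E, ∀ g ∈ E, f + g ∈ E)
    (hEsmul : ∀ (c : ℝ), ∀ f ∈ E, c • f ∈ E)
    (hEabs : ∀ f ∈ E, |f| ∈ E)
    (hEconst : ∀ c : ℝ, (fun _ : X => c) ∈ E)
    (p : ℝ) (hp : 1 ≤ p)
    (hEd : ∀ x : X, (fun y : X => dist x y ^ p) ∈ E)
    (T : ℕ → (X → ℝ) → (X → ℝ))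
    (hsub : ∀ n, ∀ f ∈ E, ∀ g ∈ E, T n (f + g) ≤ T n f + T n g)
    (hhom : ∀ n (a : ℝ), 0 ≤ a → ∀ f ∈ E, T n (a • f) = a • T n f)
    (hmono : ∀ n, ∀ f ∈ E, ∀ g ∈ E, f ≤ g → T n f ≤ T n g)
    (h1 : ∀ K : Set X, IsCompact K →
      TendstoUniformlyOn (fun n => T n 1) 1 atTop K)
    (h2 : ∀ K : Set X, IsCompact K → ∀ ε > (0 : ℝ), ∃ N : ℕ, ∀ n ≥ N, ∀ x ∈ K,
      |T n (fun y : X => dist x y ^ p) x| < ε) :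
    (∀ f ∈ E, Continuous f → (∃ M : ℝ, ∀ x, |f x| ≤ M) → 0 ≤ f →
      ∀ K : Set X, IsCompact K → TendstoUniformlyOn (fun n => T n f) f atTop K) ∧
    ((∀ n, ∀ f ∈ E, ∀ a : ℝ, 0 ≤ a → T n (f + a • 1) = T n f + a • T n 1) →
      ∀ f ∈ E, Continuous f → (∃ M : ℝ, ∀ x, |f x| ≤ M) →
        ∀ K : Set X, IsCompact K → TendstoUniformlyOn (fun n => T n f) f atTop K) := by
  have hE1 : (1 : X → ℝ) ∈ E := hEconst 1
  -- Part 1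
  have part1 : ∀ f ∈ E, Continuous f → (∃ M : ℝ, ∀ x, |f x| ≤ M) → 0 ≤ f →
      ∀ K : Set X, IsCompact K → TendstoUniformlyOn (fun n => T n f) f atTop K := by
    intro f hfE hfc hfb hf0 K hK
    obtain ⟨M₀, hM₀⟩ := hfb
    set M : ℝ := max M₀ 0 with hMdef
    have hM : ∀ x, |f x| ≤ M := fun x => (hM₀ x).trans (le_max_left _ _)
    have hMnn : 0 ≤ M := le_max_right _ _
    rw [Metric.tendstoUniformlyOn_iff]
    intro ε₀ hε₀
    -- one-third of the target accuracy
    set ε : ℝ := ε₀ / 3 with hεdef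
    have hε : 0 < ε := by positivity
    obtain ⟨δ, hδ, hδ'⟩ := korovkin_unif_cont hfc hK hε
    have hδp : (0 : ℝ) < δ ^ p := Real.rpow_pos_of_pos hδ p
    set C : ℝ := 2 * M / δ ^ p with hCdef
    have hC : 0 ≤ C := by positivity
    -- key pointwise estimate
    have key : ∀ x ∈ K, ∀ y, |f y - f x| ≤ ε + C * dist x y ^ p := by
      intro x hx y
      rcases lt_or_ge (dist x y) δ with h | h
      · have := hδ' x hx y h
        have h2 : 0 ≤ C * dist x y ^ p := by positivity
        linarith
      · have hd : δ ^ p ≤ dist x y ^ p :=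
          Real.rpow_le_rpow hδ.le h (by linarith)
        have hfy : |f y - f x| ≤ 2 * M := by
          have h3 : |f y - f x| ≤ |f y| + |f x| := by
            simpa using abs_sub_le (f y) 0 (f x)
          linarith [hM x, hM y]
        have h2M : 2 * M ≤ C * dist x y ^ p := by
          rw [hCdef, div_mul_eq_mul_div, le_div_iff₀ hδp]
          have := mul_le_mul_of_nonneg_left hd (by linarith : (0:ℝ) ≤ 2 * M)
          linarith
        linarith
    -- the auxiliary accuracy for T n 1 and T n (d_x^p)
    have hMC : (0:ℝ) < M + ε + C + 1 := by positivity
    set ε' : ℝ := min 1 (ε / (M + ε + C + 1)) with hε'def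
    have hε'pos : 0 < ε' := by
      apply lt_min one_pos
      positivity
    have hε'le1 : ε' ≤ 1 := min_le_left _ _
    have hε'small : ε' * (M + ε + C + 1) ≤ ε := by
      have := min_le_right 1 (ε / (M + ε + C + 1))
      calc ε' * (M + ε + C + 1) ≤ (ε / (M + ε + C + 1)) * (M + ε + C + 1) :=
            mul_le_mul_of_nonneg_right this (by linarith)
        _ = ε := by field_simp
    -- get uniform bounds
    have hh1 := (Metric.tendstoUniformlyOn_iff.mp (h1 K hK)) ε' hε'pos
    rw [eventually_atTop] at hh1
    obtain ⟨N₁, hN₁⟩ := hh1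
    obtain ⟨N₂, hN₂⟩ := h2 K hK ε' hε'pos
    rw [eventually_atTop]
    refine ⟨max N₁ N₂, fun n hn x hx => ?_⟩
    have hn₁ : n ≥ N₁ := le_trans (le_max_left _ _) hn
    have hn₂ : n ≥ N₂ := le_trans (le_max_right _ _) hn
    have hT1 : |T n 1 x - 1| < ε' := by
      have := hN₁ n hn₁ x hx
      rw [Real.dist_eq] at this
      simpa [abs_sub_comm] using this
    have hTg : |T n (fun y : X => dist x y ^ p) x| < ε' := hN₂ n hn₂ x hx
    set g : X → ℝ := fun y : X => dist x y ^ p with hgdef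
    have hgE : g ∈ E := hEd x
    have hCgE : C • g ∈ E := hEsmul C g hgE
    -- upper bound
    have hupper : T n f x ≤ (f x + ε) * T n 1 x + C * T n g x := by
      have hle : f ≤ (fun _ : X => f x + ε) + C • g := by
        intro y
        have := key x hx y
        have h1 := abs_le.mp this
        simp only [Pi.add_apply, Pi.smul_apply, smul_eq_mul]
        have : f y - f x ≤ ε + C * dist x y ^ p := (abs_le.mp (key x hx y)).2
        simp only [hgdef]
        linarith
      have hconstE := hEconst (f x + ε)
      have hsumE := hEadd _ hconstE _ hCgE
      have s1 : T n f ≤ T n ((fun _ : X => f x + ε) + C • g) :=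
        hmono n f hfE _ hsumE hle
      have s2 : T n ((fun _ : X => f x + ε) + C • g) ≤
          T n (fun _ : X => f x + ε) + T n (C • g) :=
        hsub n _ hconstE _ hCgE
      have hfxε : (0:ℝ) ≤ f x + ε := by
        have := hf0 x; simp only [Pi.zero_apply] at this; linarith
      have s3 : T n (fun _ : X => f x + ε) = (f x + ε) • T n 1 := by
        have heq : (fun _ : X => f x + ε) = (f x + ε) • (1 : X → ℝ) := by
          funext y; simp
        rw [heq]
        exact hhom n (f x + ε) hfxε 1 hE1
      have s4 : T n (C • g) = C • T n g := hhom n C hC g hgE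
      have h5 := le_trans (s1 x) (s2 x)
      simp only [Pi.add_apply] at h5
      rw [s3, s4] at h5
      simp only [Pi.smul_apply, smul_eq_mul] at h5
      exact h5
    -- lower bound pieces
    have hT0 : T n (0 : X → ℝ) = 0 := by
      have h := hhom n 0 le_rfl f hfE
      simpa using h
    have hTfnn : 0 ≤ T n f x := by
      have h0E : (0 : X → ℝ) ∈ E := by
        have := hEconst 0
        exact this
      have := hmono n 0 h0E f hfE hf0
      have := this x
      rw [hT0] at this
      simpa using this
    have hT1lb : 1 - ε' ≤ T n 1 x := by
      have := abs_le.mp hT1.le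
      linarith [this.1]
    have hT1ub : T n 1 x ≤ 1 + ε' := by
      have := abs_le.mp hT1.le
      linarith [this.2]
    have hTgb := abs_le.mp hTg.le
    have hfxM : f x ≤ M := le_trans (le_abs_self _) (hM x)
    have hfxnn : 0 ≤ f x := by have := hf0 x; simpa using this
    -- conclude upper estimate
    have hfinal_up : T n f x - f x ≤ ε + ε' * (M + ε + C) := by
      have e1 : (f x + ε) * T n 1 x ≤ (f x + ε) * (1 + ε') :=
        mul_le_mul_of_nonneg_left hT1ub (by linarith)
      have e2 : C * T n g x ≤ C * ε' :=
        mul_le_mul_of_nonneg_left hTgb.2 hC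
      nlinarith [hupper]
    -- lower estimate
    have hfinal_lo : f x - T n f x ≤ ε + ε' * (M + ε + C) := by
      rcases le_or_gt (f x) ε with h | h
      · nlinarith
      · -- f x - ε > 0
        have hfxε : (0:ℝ) ≤ f x - ε := by linarith
        have hlow : (f x - ε) * T n 1 x ≤ T n f x + C * T n g x := by
          have hle : (fun _ : X => f x - ε) ≤ f + C • g := by
            intro y
            have := (abs_le.mp (key x hx y)).1
            simp only [Pi.add_apply, Pi.smul_apply, smul_eq_mul, hgdef]
            linarith
          have hconstE := hEconst (f x - ε)
          have hsumE := hEadd _ hfE _ hCgE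
          have s1 : T n (fun _ : X => f x - ε) ≤ T n (f + C • g) :=
            hmono n _ hconstE _ hsumE hle
          have s2 : T n (f + C • g) ≤ T n f + T n (C • g) :=
            hsub n f hfE _ hCgE
          have s3 : T n (fun _ : X => f x - ε) = (f x - ε) • T n 1 := by
            have heq : (fun _ : X => f x - ε) = (f x - ε) • (1 : X → ℝ) := by
              funext y; simp
            rw [heq]
            exact hhom n (f x - ε) hfxε 1 hE1
          have s4 : T n (C • g) = C • T n g := hhom n C hC g hgE
          have h5 := le_trans (s1 x) (s2 x)
          rw [s3] at h5
          simp only [Pi.add_apply, Pi.smul_apply, smul_eq_mul] at h5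
          rw [s4] at h5
          simp only [Pi.smul_apply, smul_eq_mul] at h5
          linarith
        have e1 : (f x - ε) * (1 - ε') ≤ (f x - ε) * T n 1 x :=
          mul_le_mul_of_nonneg_left hT1lb hfxε
        have e2 : -(C * ε') ≤ C * T n g x := by
          have := mul_le_mul_of_nonneg_left hTgb.1 hC
          linarith
        nlinarith
    have habs : |f x - T n f x| ≤ ε + ε' * (M + ε + C) := by
      rw [abs_le]
      constructor <;> linarith
    rw [Real.dist_eq]
    have : ε + ε' * (M + ε + C) < ε₀ := by
      have h1 : ε' * (M + ε + C) ≤ ε := by nlinarith [hε'small, hε'pos.le]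
      have h3 : (3:ℝ) * ε = ε₀ := by rw [hεdef]; ring
      linarith
    calc |f x - T n f x| ≤ ε + ε' * (M + ε + C) := habs
      _ < ε₀ := this
  refine ⟨part1, ?_⟩
  -- Part 2
  intro htrans f hfE hfc hfb K hK
  obtain ⟨M₀, hM₀⟩ := hfb
  set M : ℝ := max M₀ 0 with hMdef
  have hM : ∀ x, |f x| ≤ M := fun x => (hM₀ x).trans (le_max_left _ _)
  have hMnn : 0 ≤ M := le_max_right _ _
  set g : X → ℝ := f + M • 1 with hgdef
  have hgE : g ∈ E := hEadd f hfE _ (by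
    have : (M • (1 : X → ℝ)) = (fun _ : X => M) := by funext y; simp
    rw [this]; exact hEconst M)
  have hgc : Continuous g := by
    have h9 : (M • (1 : X → ℝ)) = (fun _ : X => M) := by funext y; simp
    rw [hgdef, h9]
    exact hfc.add continuous_const
  have hgb : ∃ M' : ℝ, ∀ x, |g x| ≤ M' := by
    refine ⟨2 * M, fun x => ?_⟩
    have h1 := abs_le.mp (hM x)
    rw [hgdef]
    simp only [Pi.add_apply, Pi.smul_apply, Pi.one_apply, smul_eq_mul, mul_one]
    rw [abs_le]
    constructor <;> linarith
  have hg0 : 0 ≤ g := by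
    intro x
    have h1 := abs_le.mp (hM x)
    simp only [hgdef, Pi.add_apply, Pi.smul_apply, Pi.one_apply, smul_eq_mul,
      mul_one, Pi.zero_apply]
    linarith
  have hgconv := part1 g hgE hgc hgb hg0 K hK
  have h1conv := h1 K hK
  have hTfeq : ∀ n x, T n f x = T n g x - M * T n 1 x := by
    intro n x
    have := htrans n f hfE M hMnn
    rw [← hgdef] at this
    have := congrFun this x
    simp only [Pi.add_apply, Pi.smul_apply, smul_eq_mul] at this
    linarith
  rw [Metric.tendstoUniformlyOn_iff] at hgconv h1conv ⊢
  intro ε₀ hε₀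
  have hε' : 0 < ε₀ / (2 * (M + 1)) := by positivity
  have hA := hgconv (ε₀ / 2) (by positivity)
  have hB := h1conv (ε₀ / (2 * (M + 1))) hε'
  filter_upwards [hA, hB] with n hA hB x hx
  have e1 := hA x hx
  have e2 := hB x hx
  rw [Real.dist_eq] at e1 e2 ⊢
  have hfx : f x = g x - M := by
    simp [hgdef]
  rw [hTfeq n x, hfx]
  have : g x - M - (T n g x - M * T n 1 x) =
      (g x - T n g x) + M * (T n 1 x - 1) := by ring
  rw [this]
  have b1 : |g x - T n g x| < ε₀ / 2 := e1
  have b2 : |T n 1 x - 1| < ε₀ / (2 * (M + 1)) := by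
    simpa [abs_sub_comm] using e2
  have b3 : |M * (T n 1 x - 1)| ≤ M * (ε₀ / (2 * (M + 1))) := by
    rw [abs_mul, abs_of_nonneg hMnn]
    exact mul_le_mul_of_nonneg_left b2.le hMnn
  have b4 : M * (ε₀ / (2 * (M + 1))) < ε₀ / 2 := by
    have hM1 : (0:ℝ) < M + 1 := by linarith
    rw [← mul_div_assoc, div_lt_div_iff₀ (by positivity) (by norm_num)]
    nlinarith [hε₀]
  calc |(g x - T n g x) + M * (T n 1 x - 1)|
      ≤ |g x - T n g x| + |M * (T n 1 x - 1)| := abs_add_le _ _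
    _ < ε₀ / 2 + ε₀ / 2 := by linarith
    _ = ε₀ := by ring
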